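/- Define sequences b₀, b₁, a₀, a₁ : ℕ → ℕ by: b₀(0) = 1, b₁(0) = 0, a₀(0) = 0, a₁(0) = 0, and for all n ≥ 0: b₀(n+1) = b₀(n) + b₁(n), b₁(n+1) = b₀(n), a₀(n+1) = a₀(n) + a₁(n), a₁(n+1) = a₀(n) + b₀(n). Let a(n) := a₀(n) + a₁(n). Then the sequence n ↦ a(n)/a(n+1), viewed in ℝ, converges as n → ∞ to 2/(1 + √5). -/

import Mathlib

open Filter

noncomputable def sq5 : ℝ := Real.sqrt 5
noncomputable def phi : ℝ := (1 + sq5) / 2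
noncomputable def psi : ℝ := (1 - sq5) / 2

lemma hs2 : sq5 ^ 2 = 5 := Real.sq_sqrt (by norm_num)
lemma hs_pos : 0 < sq5 := Real.sqrt_pos.mpr (by norm_num)
lemma hsne : sq5 ≠ 0 := ne_of_gt hs_pos
lemma hs_gt2 : 2 < sq5 := by nlinarith [hs2, hs_pos]
lemma hs_lt3 : sq5 < 3 := by nlinarith [hs2, hs_pos]
lemma phi_pos : 0 < phi := by unfold phi; nlinarith [hs_gt2]
lemma phi_ne : phi ≠ 0 := ne_of_gt phi_pos
lemma phi_gt1 : 1 < phi := by unfold phi; nlinarith [hs_gt2]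
lemma hphips : phi * psi = -1 := by unfold phi psi; nlinarith [hs2]
lemma hphi2 : phi ^ 2 = phi + 1 := by unfold phi; nlinarith [hs2]
lemma hpsi2 : psi ^ 2 = psi + 1 := by unfold psi; nlinarith [hs2]
lemma hdiff : phi - psi = sq5 := by unfold phi psi; ring
lemma abs_psi_lt1 : |psi| < 1 := by
  unfold psi; rw [abs_lt]; constructor <;> nlinarith [hs_gt2, hs_lt3]

noncomputable def g (n : ℕ) : ℝ :=
  ((n : ℝ) * (phi ^ (n + 1) + psi ^ (n + 1)) + (2 / sq5) * (phi ^ n - psi ^ n)) / 5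
noncomputable def A0 (n : ℕ) : ℝ :=
  (((n : ℝ) - 1) * (phi ^ n + psi ^ n) + (2 / sq5) * (phi * psi ^ n - psi * phi ^ n)) / 5
noncomputable def B0 (n : ℕ) : ℝ := (phi ^ (n + 1) - psi ^ (n + 1)) / sq5
noncomputable def B1 (n : ℕ) : ℝ := (phi ^ n - psi ^ n) / sq5

lemma I1 (n : ℕ) : B0 (n + 1) = B0 n + B1 n := by
  unfold B0 B1
  rw [← add_div, div_eq_div_iff hsne hsne]
  ring_nf
  linear_combination (sq5 * phi ^ n) * hphi2 - (sq5 * psi ^ n) * hpsi2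

lemma I2 (n : ℕ) : A0 (n + 1) = g n := by
  unfold A0 g
  push_cast
  rw [div_eq_div_iff (by norm_num) (by norm_num)]
  ring_nf
  linear_combination ((10 * psi ^ n - 10 * phi ^ n) * sq5⁻¹) * hphips

lemma ht : sq5⁻¹ = (phi - psi) / 5 := by
  rw [hdiff]
  rw [eq_div_iff (show (5:ℝ) ≠ 0 by norm_num), inv_mul_eq_div, div_eq_iff hsne]
  linear_combination -hs2

lemma I3 (n : ℕ) : g (n + 1) - g n = A0 n + B0 n := by
  unfold A0 g B0
  push_cast
  simp only [div_eq_mul_inv, ht]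
  linear_combination (((n:ℝ)+1)*phi^n/5 - 3*phi^n/25 - 2*psi^n/25) * hphi2 +
    (((n:ℝ)+1)*psi^n/5 - 2*phi^n/25 - 3*psi^n/25) * hpsi2 + ((phi^n+psi^n)/5) * hphips

noncomputable def rr : ℝ := psi / phi
noncomputable def u (n : ℕ) : ℝ :=
  1 + rr ^ (n + 1) + (2 / (sq5 * phi)) * ((1 - rr ^ n) * (1 / (n : ℝ)))

lemma abs_rr_lt1 : |rr| < 1 := by
  unfold rr
  rw [abs_div, abs_of_pos phi_pos, div_lt_one phi_pos]
  calc |psi| < 1 := abs_psi_lt1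
    _ < phi := phi_gt1

lemma hgu (n : ℕ) (hn : 1 ≤ n) : g n = ((n : ℝ) * phi ^ (n + 1) / 5) * u n := by
  have hnne : ((n : ℝ)) ≠ 0 := by positivity
  have h1 : phi ^ n ≠ 0 := pow_ne_zero _ phi_ne
  have h2 : phi ^ (n+1) ≠ 0 := pow_ne_zero _ phi_ne
  have k1 : phi ^ (n+1) * rr ^ (n+1) = psi ^ (n+1) := by
    rw [rr, div_pow]; field_simp
  have k2 : phi ^ n * rr ^ n = psi ^ n := by
    rw [rr, div_pow]; field_simp
  have k3 : (n:ℝ) * (1/(n:ℝ)) = 1 := by field_simp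
  have k5 : phi ^ (n+1) * phi⁻¹ = phi ^ n := by
    rw [pow_succ, mul_assoc, mul_inv_cancel₀ phi_ne, mul_one]
  unfold g u
  linear_combination (-((n:ℝ)/5)) * k1
    - (2/(5*sq5)) * ((phi^(n+1) * phi⁻¹) * (1 - rr^n)) * k3
    - (2/(5*sq5)) * (1 - rr^n) * k5
    + (2/(5*sq5)) * k2

lemma hu_tendsto : Tendsto u atTop (nhds 1) := by
  have hr : Tendsto (fun n : ℕ => rr ^ n) atTop (nhds 0) :=
    tendsto_pow_atTop_nhds_zero_of_abs_lt_one abs_rr_lt1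
  have h1 : Tendsto (fun n : ℕ => rr ^ (n + 1)) atTop (nhds 0) :=
    hr.comp (tendsto_add_atTop_nat 1)
  have h2 : Tendsto (fun n : ℕ => (2 / (sq5 * phi)) * ((1 - rr ^ n) * (1 / (n : ℝ))))
      atTop (nhds (2 / (sq5 * phi) * ((1 - 0) * 0))) :=
    (((tendsto_const_nhds.sub hr).mul tendsto_one_div_atTop_nhds_zero_nat)).const_mul _
  have h0 : Tendsto (fun _ : ℕ => (1:ℝ)) atTop (nhds 1) := tendsto_const_nhds
  have := (h0.add h1).add h2
  simp only [add_zero, mul_zero, one_mul, sub_zero] at this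
  unfold u
  simpa using this

theorem stmt_9 (b0 b1 a0 a1 : ℕ → ℕ)
    (hb00 : b0 0 = 1) (hb10 : b1 0 = 0) (ha00 : a0 0 = 0) (ha10 : a1 0 = 0)
    (hb0 : ∀ n, b0 (n + 1) = b0 n + b1 n)
    (hb1 : ∀ n, b1 (n + 1) = b0 n)
    (ha0 : ∀ n, a0 (n + 1) = a0 n + a1 n)
    (ha1 : ∀ n, a1 (n + 1) = a0 n + b0 n) :
    Tendsto (fun n : ℕ => ((a0 n + a1 n : ℕ) : ℝ) / ((a0 (n + 1) + a1 (n + 1) : ℕ) : ℝ))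
      atTop (nhds (2 / (1 + Real.sqrt 5))) := by
  -- closed forms
  have key : ∀ n, (b0 n : ℝ) = B0 n ∧ (b1 n : ℝ) = B1 n ∧
      (a0 n : ℝ) = A0 n ∧ (a1 n : ℝ) = g n - A0 n := by
    intro n
    induction n with
    | zero =>
      refine ⟨?_, ?_, ?_, ?_⟩
      · rw [hb00]; unfold B0; rw [pow_one, pow_one, hdiff, div_self hsne]; norm_num
      · rw [hb10]; unfold B1; norm_num
      · rw [ha00]; unfold A0
        simp only [pow_zero, mul_one, Nat.cast_zero]
        rw [hdiff, div_mul_cancel₀ _ hsne]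
        norm_num
      · rw [ha10]; unfold g A0
        simp only [pow_zero, pow_one, mul_one, sub_self, mul_zero, Nat.cast_zero,
          zero_mul, add_zero, zero_add, zero_div]
        rw [hdiff, div_mul_cancel₀ _ hsne]
        norm_num
    | succ m ih =>
      obtain ⟨ihb0, ihb1, iha0, iha1⟩ := ih
      refine ⟨?_, ?_, ?_, ?_⟩
      · rw [hb0 m]; push_cast; rw [ihb0, ihb1, I1]
      · rw [hb1 m]; rw [ihb0]; unfold B0 B1; norm_num
      · rw [ha0 m]; push_cast; rw [iha0, iha1, I2]; ring
      · rw [ha1 m]; push_cast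
        rw [iha0, ihb0, I2]
        have := I3 m
        linarith
  have hb0ge : ∀ n, 1 ≤ b0 n := by
    intro n
    induction n with
    | zero => omega
    | succ m ih => rw [hb0 m]; omega
  have apos : ∀ n, 1 ≤ a0 (n + 1) + a1 (n + 1) := by
    intro n
    have := hb0ge n
    rw [ha1 n]
    omega
  have hag : ∀ n, ((a0 n + a1 n : ℕ) : ℝ) = g n := by
    intro n
    obtain ⟨_, _, h3, h4⟩ := key n
    push_cast
    rw [h3, h4]; ring
  have gpos : ∀ n, 1 ≤ n → 0 < g n := by
    intro n hn
    obtain ⟨m, rfl⟩ : ∃ m, n = m + 1 := ⟨n - 1, by omega⟩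
    rw [← hag]
    have h := apos m
    have : (1 : ℝ) ≤ ((a0 (m + 1) + a1 (m + 1) : ℕ) : ℝ) := by exact_mod_cast h
    linarith
  have upos : ∀ n, 1 ≤ n → 0 < u n := by
    intro n hn
    have hg := hgu n hn
    have hnpos : (0 : ℝ) < n := by exact_mod_cast hn
    have hpref : 0 < (n : ℝ) * phi ^ (n + 1) / 5 :=
      div_pos (mul_pos hnpos (pow_pos phi_pos _)) (by norm_num)
    nlinarith [gpos n hn]
  -- eventual equality with a nice sequence
  have heq : ∀ᶠ n in atTop, ((a0 n + a1 n : ℕ) : ℝ) / ((a0 (n + 1) + a1 (n + 1) : ℕ) : ℝ)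
      = ((n : ℝ) / ((n : ℝ) + 1)) * phi⁻¹ * (u n / u (n + 1)) := by
    filter_upwards [eventually_ge_atTop 1] with n hn
    have hun1 : 0 < u (n + 1) := upos (n + 1) (by omega)
    have hn1 : (0:ℝ) < ((n : ℝ) + 1) := by positivity
    have e1 : ((n : ℝ) / ((n : ℝ) + 1)) * phi⁻¹ * (u n / u (n + 1))
        = ((n : ℝ) * 1 * u n) / ((((n : ℝ) + 1) * phi) * u (n + 1)) := by
      rw [inv_eq_one_div, div_mul_div_comm, div_mul_div_comm]
    rw [hag n, hag (n + 1), hgu n hn, hgu (n + 1) (by omega), e1]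
    have hB : (0:ℝ) < ((n : ℕ) + 1 : ℕ) * phi ^ (n + 1 + 1) / 5 * u (n + 1) := by
      apply mul_pos _ hun1
      apply div_pos _ (by norm_num)
      apply mul_pos _ (pow_pos phi_pos _)
      positivity
    have hD : (0:ℝ) < (((n : ℝ) + 1) * phi) * u (n + 1) :=
      mul_pos (mul_pos hn1 phi_pos) hun1
    rw [div_eq_div_iff (ne_of_gt hB) (ne_of_gt hD)]
    push_cast
    ring
  -- compute the limit
  have T1 : Tendsto (fun n : ℕ => (n : ℝ) / ((n : ℝ) + 1)) atTop (nhds 1) :=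
    tendsto_natCast_div_add_atTop (1 : ℝ)
  have T3 : Tendsto (fun n : ℕ => u n / u (n + 1)) atTop (nhds (1 / 1)) :=
    hu_tendsto.div (hu_tendsto.comp (tendsto_add_atTop_nat 1)) one_ne_zero
  have Tall : Tendsto (fun n : ℕ => ((n : ℝ) / ((n : ℝ) + 1)) * phi⁻¹ * (u n / u (n + 1)))
      atTop (nhds (1 * phi⁻¹ * (1 / 1))) :=
    (T1.mul tendsto_const_nhds).mul T3
  have hval : 1 * phi⁻¹ * (1 / 1) = 2 / (1 + Real.sqrt 5) := by
    rw [one_mul, div_one, mul_one]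
    unfold phi sq5
    rw [inv_div]
  rw [← hval]
  exact Tendsto.congr' (Filter.EventuallyEq.symm heq) Tall
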